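/- Let u be an infinite word fixed by a morphism σ, prolongable on its first letter, and suppose some letter b of maximal growth occurs at least twice in u, say u begins with U b V b for finite words U, V (U possibly empty). Then the Diophantine exponent of u is strictly greater than 1; more precisely, there is δ > 0 such that for every n the prefix σⁿ(U)·σⁿ(bV)^{δₙ} of u, with δₙ = 1 + |σⁿ(b)|/|σⁿ(bV)|, satisfies |σⁿ(U)σⁿ(bV)^{δₙ}| / |σⁿ(U)σⁿ(bV)| ≥ 1 + δ. -/

import Mathlib

/-- `w` is a prefix of the infinite word `a`. -/
def IsPrefOf {A : Type*} (w : List A) (a : ℕ → A) : Prop :=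
  ∀ i : Fin w.length, w.get i = a i

/-- Fractional power `V^α`: `V^⌊α⌋` followed by the prefix of `V`
of length `⌈{α}·|V|⌉`. -/
noncomputable def fracPow {A : Type*} (V : List A) (α : ℝ) : List A :=
  (List.replicate ⌊α⌋₊ V).flatten ++ V.take ⌈Int.fract α * V.length⌉₊

/-- The set of admissible exponents in the definition of the Diophantine exponent. -/
def dioSet {A : Type*} (a : ℕ → A) : Set ℝ :=
  {ρ | ∀ N : ℕ, ∃ (U V : List A) (α : ℝ), V ≠ [] ∧ 1 ≤ α ∧
    IsPrefOf (U ++ fracPow V α) a ∧ N ≤ (U ++ fracPow V α).length ∧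
    ρ ≤ ((U ++ fracPow V α).length : ℝ) / ((U.length : ℝ) + (V.length : ℝ))}

/-- Diophantine exponent of an infinite word. -/
noncomputable def dio {A : Type*} (a : ℕ → A) : EReal :=
  sSup ((fun ρ : ℝ => (ρ : EReal)) '' dioSet a)

/-- Action of a morphism (given by its values on letters) on a finite word. -/
def mapW {A : Type*} (σ : A → List A) (w : List A) : List A := w.flatMap σ

/-- `n`-th iterate of a morphism applied to a word. -/
def iterW {A : Type*} (σ : A → List A) (n : ℕ) (w : List A) : List A :=
  (mapW σ)^[n] w

/-- `σ` is prolongable on the letter `a`. -/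
def Prolongable {A : Type*} (σ : A → List A) (a : A) : Prop :=
  (∃ W : List A, W ≠ [] ∧ σ a = a :: W) ∧
  Filter.Tendsto (fun n => (iterW σ n [a]).length) Filter.atTop Filter.atTop

/-- The letter `b` has maximal growth for `σ`. -/
def MaxGrowth {A : Type*} (σ : A → List A) (b : A) : Prop :=
  ∃ C : ℝ, ∀ c : A, ∀ n : ℕ, 1 ≤ n →
    ((iterW σ n [c]).length : ℝ) < C * ((iterW σ n [b]).length : ℝ)

/-- Incidence matrix of a morphism, viewed over `ℂ`. -/
noncomputable def incMat {A : Type*} [Fintype A] [DecidableEq A]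
    (σ : A → List A) : Matrix A A ℂ :=
  fun i j => ((σ j).count i : ℂ)

/-- Spectral radius of the incidence matrix of a morphism. -/
noncomputable def specRad {A : Type*} [Fintype A] [DecidableEq A]
    (σ : A → List A) : ℝ :=
  sSup ((fun μ : ℂ => ‖μ‖) '' spectrum ℂ (incMat σ))


section AuxLemmas

variable {A : Type*}

lemma mapW_append' (σ : A → List A) (w t : List A) :
    mapW σ (w ++ t) = mapW σ w ++ mapW σ t := by
  simp [mapW]

lemma iterW_append' (σ : A → List A) (n : ℕ) (w t : List A) :
    iterW σ n (w ++ t) = iterW σ n w ++ iterW σ n t := by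
  induction n generalizing w t with
  | zero => simp [iterW]
  | succ n ih =>
      simp only [iterW, Function.iterate_succ_apply] at *
      rw [mapW_append' σ w t, ih]

lemma iterW_iterW' (σ : A → List A) (n m : ℕ) (w : List A) :
    iterW σ n (iterW σ m w) = iterW σ (n + m) w := by
  simp [iterW, ← Function.iterate_add_apply]

lemma iterW_prefix' (σ : A → List A) (n : ℕ) {w t : List A} (h : w <+: t) :
    iterW σ n w <+: iterW σ n t := by
  obtain ⟨s, rfl⟩ := h
  exact ⟨iterW σ n s, (iterW_append' σ n w s).symm⟩

lemma isPrefOf_of_prefix' {w t : List A} {a : ℕ → A} (h : w <+: t) (ht : IsPrefOf t a) :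
    IsPrefOf w a := by
  intro i
  have hlt : (i : ℕ) < t.length := lt_of_lt_of_le i.isLt h.length_le
  have h2 := ht ⟨i, hlt⟩
  simp only [List.get_eq_getElem] at *
  rw [h.getElem i.isLt]
  exact h2

lemma prefix_of_isPrefOf' {w t : List A} {a : ℕ → A} (hw : IsPrefOf w a)
    (ht : IsPrefOf t a) (h : w.length ≤ t.length) : w <+: t := by
  rw [List.prefix_iff_eq_take]
  apply List.ext_get
  · simp [h]
  · intro i h1 h2
    have h1' : i < w.length := h1
    have h3 := hw ⟨i, h1'⟩
    have h4 := ht ⟨i, lt_of_lt_of_le h1' h⟩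
    simp only [List.get_eq_getElem] at *
    rw [List.getElem_take]
    rw [h3, h4]

lemma fracPow_eq_spec' (W : List A) (p : ℕ) (hp : 1 ≤ p) (hpq : p ≤ W.length) :
    fracPow W (1 + (p : ℝ) / (W.length : ℝ)) = W ++ W.take p := by
  have hq : 0 < W.length := lt_of_lt_of_le hp hpq
  have hq' : (0:ℝ) < (W.length : ℝ) := by exact_mod_cast hq
  rcases eq_or_lt_of_le hpq with h | h
  · have h2 : (1 : ℝ) + (p:ℝ) / (W.length:ℝ) = 2 := by
      rw [h, div_self hq'.ne']; norm_num
    rw [h2]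
    have hf : Int.fract (2:ℝ) = 0 := by
      rw [show (2:ℝ) = ((2:ℤ):ℝ) by norm_num, Int.fract_intCast]
    have hfl : ⌊(2:ℝ)⌋₊ = 2 := by norm_num
    rw [fracPow, hf, hfl]
    simp [h, List.take_length]
  · have hlt : (p:ℝ) / (W.length:ℝ) < 1 := (div_lt_one hq').mpr (by exact_mod_cast h)
    have hge : (0:ℝ) ≤ (p:ℝ) / (W.length:ℝ) := by positivity
    have hfl : ⌊(1 + (p:ℝ) / (W.length:ℝ))⌋₊ = 1 := by
      rw [Nat.floor_eq_iff (by linarith)]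
      constructor
      · push_cast; linarith
      · push_cast; linarith
    have hifl : ⌊(1 + (p:ℝ) / (W.length:ℝ))⌋ = 1 := by
      rw [Int.floor_eq_iff]
      constructor
      · push_cast; linarith
      · push_cast; linarith
    have hf : Int.fract (1 + (p:ℝ) / (W.length:ℝ)) = (p:ℝ) / (W.length:ℝ) := by
      rw [Int.fract, hifl]; push_cast; ring
    have hmul : (p:ℝ) / (W.length:ℝ) * (W.length:ℝ) = (p:ℝ) :=
      div_mul_cancel₀ _ hq'.ne'
    rw [fracPow, hf, hfl, hmul, Nat.ceil_natCast]
    simp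

end AuxLemmas
/-- if a letter `b` of maximal growth occurs twice in a fixed point `u`
(say `u` begins with `U b V b`), then the prefixes `σⁿ(U) σⁿ(bV)^{δₙ}` with
`δₙ = 1 + |σⁿ(b)|/|σⁿ(bV)|` witness `dio(u) > 1` with a uniform gap `δ`. -/

theorem stmt_4 {A : Type*} [Fintype A] (σ : A → List A)
    (u : ℕ → A) (hpro : Prolongable σ (u 0))
    (hfix : ∀ n : ℕ, IsPrefOf (iterW σ n [u 0]) u)
    (b : A) (hb : MaxGrowth σ b)
    (U V : List A) (hUV : IsPrefOf (U ++ [b] ++ V ++ [b]) u) :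
    (1 : EReal) < dio u ∧
      ∃ δ : ℝ, 0 < δ ∧ ∀ n : ℕ,
        IsPrefOf
          (iterW σ n U ++
            fracPow (iterW σ n (b :: V))
              (1 + ((iterW σ n [b]).length : ℝ) / ((iterW σ n (b :: V)).length : ℝ)))
          u ∧
        1 + δ ≤
          (((iterW σ n U ++
              fracPow (iterW σ n (b :: V))
                (1 + ((iterW σ n [b]).length : ℝ) /
                  ((iterW σ n (b :: V)).length : ℝ))).length : ℝ)) /
            (((iterW σ n U).length : ℝ) + ((iterW σ n (b :: V)).length : ℝ)) := by
  obtain ⟨C, hC⟩ := hb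
  obtain ⟨⟨W0, hW0ne, hW0⟩, htend⟩ := hpro
  -- positivity of iterates of the first letter
  have hlen1 : ∀ n : ℕ, 1 ≤ (iterW σ n [u 0]).length := by
    intro n
    induction n with
    | zero => simp [iterW]
    | succ n ih =>
        have : iterW σ (n+1) [u 0] = iterW σ n [u 0] ++ iterW σ n W0 := by
          rw [iterW, Function.iterate_succ_apply]
          have : mapW σ [u 0] = [u 0] ++ W0 := by simp [mapW, hW0]
          rw [show (mapW σ)^[n] (mapW σ [u 0]) = iterW σ n (mapW σ [u 0]) from rfl,
            this, iterW_append']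
        rw [this, List.length_append]
        omega
  -- positivity of iterates of b
  have hbpos : ∀ n : ℕ, 1 ≤ (iterW σ n [b]).length := by
    intro n
    rcases Nat.eq_zero_or_pos n with rfl | hn
    · simp [iterW]
    · by_contra hcon
      have hz : (iterW σ n [b]).length = 0 := by omega
      have := hC (u 0) n hn
      rw [hz] at this
      have h1 := hlen1 n
      push_cast at this
      simp at this
      have : (1:ℝ) ≤ ((iterW σ n [u 0]).length : ℝ) := by exact_mod_cast h1
      linarith [hC (u 0) n hn, hz]
  have hC1 : 1 < C := by
    have h1 := hC b 1 le_rfl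
    have h2 : (1:ℝ) ≤ ((iterW σ 1 [b]).length : ℝ) := by exact_mod_cast hbpos 1
    nlinarith
  have hCpos : 0 < C := by linarith
  -- uniform length bound
  have hbound : ∀ (n : ℕ) (w : List A),
      ((iterW σ n w).length : ℝ) ≤ C * w.length * ((iterW σ n [b]).length : ℝ) := by
    intro n w
    rcases Nat.eq_zero_or_pos n with rfl | hn
    · simp only [iterW, Function.iterate_zero, id_eq, List.length_singleton,
        Nat.cast_one, mul_one]
      nlinarith [Nat.cast_nonneg (α := ℝ) w.length]
    · induction w with
      | nil =>
          simp only [iterW, List.length_nil, Nat.cast_zero, mul_zero, zero_mul]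
          rw [Function.iterate_fixed (show mapW σ [] = [] by simp [mapW]) n]
          simp
      | cons c w ih =>
          have hsplit : iterW σ n (c :: w) = iterW σ n [c] ++ iterW σ n w := by
            rw [show (c :: w) = [c] ++ w from rfl, iterW_append']
          have h1 := (hC c n hn).le
          have hp0 : (0:ℝ) ≤ ((iterW σ n [b]).length : ℝ) := Nat.cast_nonneg _
          rw [hsplit, List.length_append]
          simp only [List.length_cons]
          push_cast
          nlinarith
  -- prefixes are preserved by iterating the morphism
  have hprefix : ∀ (n : ℕ) (w : List A), IsPrefOf w u → IsPrefOf (iterW σ n w) u := by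
    intro n w hw
    obtain ⟨m, hm⟩ := (htend.eventually_ge_atTop w.length).exists
    have h1 : w <+: iterW σ m [u 0] := prefix_of_isPrefOf' hw (hfix m) hm
    have h2 : iterW σ n w <+: iterW σ (n + m) [u 0] := by
      rw [← iterW_iterW']
      exact iterW_prefix' σ n h1
    exact isPrefOf_of_prefix' h2 (hfix (n + m))
  -- notation
  set K : ℝ := (U.length : ℝ) + (V.length : ℝ) + 1 with hK
  have hK1 : 1 ≤ K := by
    rw [hK]
    have h1 : (0:ℝ) ≤ (U.length : ℝ) := Nat.cast_nonneg _
    have h2 : (0:ℝ) ≤ (V.length : ℝ) := Nat.cast_nonneg _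
    linarith
  set δ : ℝ := 1 / (C * K) with hδdef
  have hCK : 0 < C * K := by positivity
  have hδ : 0 < δ := by positivity
  -- key per-n facts
  have hsplitQ : ∀ n : ℕ, iterW σ n (b :: V) = iterW σ n [b] ++ iterW σ n V := by
    intro n
    rw [show (b :: V) = [b] ++ V from rfl, iterW_append']
  have hpq : ∀ n : ℕ, (iterW σ n [b]).length ≤ (iterW σ n (b :: V)).length := by
    intro n; rw [hsplitQ n, List.length_append]; omega
  have hWeq : ∀ n : ℕ,
      iterW σ n U ++ fracPow (iterW σ n (b :: V))
        (1 + ((iterW σ n [b]).length : ℝ) / ((iterW σ n (b :: V)).length : ℝ))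
      = iterW σ n (U ++ [b] ++ V ++ [b]) := by
    intro n
    rw [fracPow_eq_spec' _ _ (hbpos n) (hpq n)]
    have htake : (iterW σ n (b :: V)).take (iterW σ n [b]).length = iterW σ n [b] := by
      rw [hsplitQ n]
      exact List.take_left
    rw [htake]
    simp only [iterW_append', hsplitQ]
    simp [List.append_assoc]
  have hkey : ∀ n : ℕ,
      IsPrefOf
          (iterW σ n U ++
            fracPow (iterW σ n (b :: V))
              (1 + ((iterW σ n [b]).length : ℝ) / ((iterW σ n (b :: V)).length : ℝ)))
          u ∧
        1 + δ ≤
          (((iterW σ n U ++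
              fracPow (iterW σ n (b :: V))
                (1 + ((iterW σ n [b]).length : ℝ) /
                  ((iterW σ n (b :: V)).length : ℝ))).length : ℝ)) /
            (((iterW σ n U).length : ℝ) + ((iterW σ n (b :: V)).length : ℝ)) := by
    intro n
    constructor
    · rw [hWeq n]
      exact hprefix n _ hUV
    · set p : ℝ := ((iterW σ n [b]).length : ℝ) with hp
      set q : ℝ := ((iterW σ n (b :: V)).length : ℝ) with hq
      set x : ℝ := ((iterW σ n U).length : ℝ) with hx
      have hp1 : 1 ≤ p := by rw [hp]; exact_mod_cast hbpos n
      have hpq' : p ≤ q := by rw [hp, hq]; exact_mod_cast hpq n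
      have hx0 : 0 ≤ x := Nat.cast_nonneg _
      have hlen : (((iterW σ n U ++
              fracPow (iterW σ n (b :: V))
                (1 + ((iterW σ n [b]).length : ℝ) /
                  ((iterW σ n (b :: V)).length : ℝ))).length : ℝ)) = x + q + p := by
        rw [fracPow_eq_spec' _ _ (hbpos n) (hpq n)]
        simp only [List.length_append, List.length_take]
        rw [min_eq_left (hpq n)]
        push_cast
        ring
      rw [hlen]
      have hden : 0 < x + q := by linarith
      rw [le_div_iff₀ hden]
      -- x + q ≤ C * K * p
      have hsum : x + q ≤ C * K * p := by
        have h1 : ((iterW σ n (U ++ b :: V)).length : ℝ)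
            ≤ C * ((U ++ b :: V).length : ℝ) * p := hbound n (U ++ b :: V)
        have h2 : iterW σ n (U ++ b :: V) = iterW σ n U ++ iterW σ n (b :: V) :=
          iterW_append' σ n U (b :: V)
        rw [h2, List.length_append] at h1
        have h3 : ((U ++ b :: V).length : ℝ) = K := by
          simp [hK]; ring
        rw [h3] at h1
        push_cast at h1
        linarith
      have h4 : δ * (x + q) ≤ δ * (C * K * p) :=
        mul_le_mul_of_nonneg_left hsum hδ.le
      have h5 : δ * (C * K * p) = p := by
        rw [hδdef]; field_simp
      nlinarith
  refine ⟨?_, δ, hδ, hkey⟩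
  -- dio u > 1
  have hmem : (1 + δ) ∈ dioSet u := by
    intro N
    obtain ⟨n, hn⟩ := ((htend.eventually_ge_atTop (⌈C⌉₊ * N)).and
      (Filter.eventually_ge_atTop 1)).exists
    obtain ⟨hn2, hn1⟩ := hn
    have hNp : N ≤ (iterW σ n [b]).length := by
      have h1 := hC (u 0) n hn1
      have h2 : ((⌈C⌉₊ * N : ℕ) : ℝ) ≤ ((iterW σ n [u 0]).length : ℝ) := by
        exact_mod_cast hn2
      have h3 : C * (N : ℝ) ≤ ((⌈C⌉₊ * N : ℕ) : ℝ) := by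
        push_cast
        exact mul_le_mul_of_nonneg_right (Nat.le_ceil C) (Nat.cast_nonneg N)
      have h4 : (N : ℝ) < ((iterW σ n [b]).length : ℝ) := by
        by_contra hcon
        push_neg at hcon
        nlinarith
      exact_mod_cast h4.le
    refine ⟨iterW σ n U, iterW σ n (b :: V),
      1 + ((iterW σ n [b]).length : ℝ) / ((iterW σ n (b :: V)).length : ℝ),
      ?_, ?_, (hkey n).1, ?_, (hkey n).2⟩
    · have : 0 < (iterW σ n (b :: V)).length := lt_of_lt_of_le (hbpos n) (hpq n)
      exact List.ne_nil_of_length_pos this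
    · have : (0:ℝ) ≤ ((iterW σ n [b]).length : ℝ) / ((iterW σ n (b :: V)).length : ℝ) := by
        positivity
      linarith
    · rw [List.length_append]
      calc N ≤ (iterW σ n [b]).length := hNp
        _ ≤ (iterW σ n (b :: V)).length := hpq n
        _ ≤ (fracPow (iterW σ n (b :: V))
              (1 + ((iterW σ n [b]).length : ℝ) / ((iterW σ n (b :: V)).length : ℝ))).length := by
            rw [fracPow_eq_spec' _ _ (hbpos n) (hpq n), List.length_append]
            omega
        _ ≤ _ := Nat.le_add_left _ _
  have hle : ((1 + δ : ℝ) : EReal) ≤ dio u :=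
    le_sSup ⟨1 + δ, hmem, rfl⟩
  refine lt_of_lt_of_le ?_ hle
  rw [show (1 : EReal) = ((1:ℝ) : EReal) from rfl]
  exact_mod_cast (by linarith : (1:ℝ) < 1 + δ)
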